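/- Fix q ∈ (0,1], L > 1/(2q), K > 0. The minimum over ξ ∈ (0,1) of A_p = 1/ξ + 2/(qp) - 1, with p the stable solution of p = exp{-Lqξ/(ξ + pq(1-ξ)) - K}, equals [qL(√(1 + 4/(qL)) + 1) + 2] / [2q·exp{-2/(√(1 + 4/(qL)) + 1) - K}], attained at ξ* = 2q·e^{-2/(√(1+4/(qL))+1) - K} / [qL(√(1+4/(qL))+1) + 2q·e^{-2/(√(1+4/(qL))+1) - K} - 2]. -/

import Mathlib

open Real Set

private lemma key12 (c t ts : ℝ) (hc : 0 < c) (ht : 0 < t) (hts : 0 < ts)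
    (hq2 : ts ^ 2 + c * ts = c) :
    (c + ts) * Real.exp ts / ts ≤ (c + t) * Real.exp t / t := by
  have h1 : Real.exp ts * (1 + (t - ts)) ≤ Real.exp t := by
    have h := Real.add_one_le_exp (t - ts)
    calc Real.exp ts * (1 + (t - ts)) ≤ Real.exp ts * Real.exp (t - ts) := by
          exact mul_le_mul_of_nonneg_left (by linarith) (Real.exp_pos ts).le
      _ = Real.exp t := by rw [← Real.exp_add]; ring_nf
  have h2 : (c + ts) * t ≤ (c + t) * ts * (1 + (t - ts)) := by
    nlinarith [mul_nonneg hts.le (sq_nonneg (t - ts))]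
  rw [div_le_div_iff₀ hts ht]
  calc (c + ts) * Real.exp ts * t = ((c + ts) * t) * Real.exp ts := by ring
    _ ≤ ((c + t) * ts * (1 + (t - ts))) * Real.exp ts :=
        mul_le_mul_of_nonneg_right h2 (Real.exp_pos ts).le
    _ = (c + t) * ts * (Real.exp ts * (1 + (t - ts))) := by ring
    _ ≤ (c + t) * ts * Real.exp t := by
        have hcts : 0 < (c + t) * ts := by positivity
        exact mul_le_mul_of_nonneg_left h1 hcts.le
    _ = (c + t) * Real.exp t * ts := by ring

set_option maxHeartbeats 2000000 in
theorem stmt12 (L K q : ℝ) (hK : 0 < K) (hq : q ∈ Ioc (0:ℝ) 1)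
    (hLq : 1 / (2 * q) < L) :
    let s := Real.sqrt (1 + 4 / (q * L));
    let V := (q * L * (s + 1) + 2) / (2 * q * Real.exp (-2 / (s + 1) - K));
    let ξs := 2 * q * Real.exp (-2 / (s + 1) - K) /
      (q * L * (s + 1) + 2 * q * Real.exp (-2 / (s + 1) - K) - 2);
    ξs ∈ Ioo (0:ℝ) 1 ∧
    (∀ ξ p : ℝ, ξ ∈ Ioo (0:ℝ) 1 → p ∈ Ioc (0:ℝ) 1 →
      p = Real.exp (-(L * q * ξ) / (ξ + p * q * (1 - ξ)) - K) →
      V ≤ 1 / ξ + 2 / (q * p) - 1) ∧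
    (∃ p ∈ Ioc (0:ℝ) 1,
      p = Real.exp (-(L * q * ξs) / (ξs + p * q * (1 - ξs)) - K) ∧
      1 / ξs + 2 / (q * p) - 1 = V) := by
  obtain ⟨hq0, hq1⟩ := hq
  have hL0 : 0 < L := lt_trans (by positivity) hLq
  have hqL : 1 / 2 < q * L := by
    rw [div_lt_iff₀ (by positivity)] at hLq
    nlinarith
  have hqL0 : 0 < q * L := by linarith
  intro s V ξs
  have hsd : s = Real.sqrt (1 + 4 / (q * L)) := rfl
  have hVd : V = (q * L * (s + 1) + 2) / (2 * q * Real.exp (-2 / (s + 1) - K)) := rfl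
  have hξd : ξs = 2 * q * Real.exp (-2 / (s + 1) - K) /
      (q * L * (s + 1) + 2 * q * Real.exp (-2 / (s + 1) - K) - 2) := rfl
  clear_value s V ξs
  have hs2 : s ^ 2 = 1 + 4 / (q * L) := by
    rw [hsd]; exact Real.sq_sqrt (by positivity)
  have hs1 : 1 < s := by
    have h0 : (0:ℝ) ≤ s := hsd ▸ Real.sqrt_nonneg _
    nlinarith [div_pos (by norm_num : (0:ℝ) < 4) hqL0]
  have hsp : (0:ℝ) < s + 1 := by linarith
  -- t* and its quadratic
  set ts : ℝ := 2 / (s + 1) with hts_def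
  have hts0 : 0 < ts := by positivity
  have htss : ts * (s + 1) = 2 := by rw [hts_def]; field_simp
  have hquad : ts ^ 2 + (q * L) * ts = q * L := by
    have h4 : q * L * s ^ 2 = q * L + 4 := by
      have h4' : 4 / (q * L) * (q * L) = 4 := by field_simp
      rw [hs2]; linear_combination h4'
    rw [hts_def]
    field_simp
    nlinarith [h4]
  have hts1 : ts < 1 := by
    rw [hts_def, div_lt_one hsp]; linarith
  -- abstract the exponential
  set E : ℝ := Real.exp (-2 / (s + 1) - K) with hE_def
  have hE_eq : E = Real.exp (-ts - K) := by
    rw [hE_def, hts_def, neg_div]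
  have hE0 : 0 < E := Real.exp_pos _
  have hE1 : E ≤ 1 := by
    rw [hE_eq]
    exact Real.exp_le_one_iff.mpr (by nlinarith)
  have hEX : Real.exp ts * Real.exp K = E⁻¹ := by
    rw [hE_eq, ← Real.exp_add, ← Real.exp_neg]; congr 1; ring
  clear_value ts E
  -- qL(s+1) > 2
  have hqLts : ts < q * L := by
    have h4 : q * L * s ^ 2 = q * L + 4 := by
      have h4' : 4 / (q * L) * (q * L) = 4 := by field_simp
      rw [hs2]; linear_combination h4'
    have hgt : 2 < q * L * (s + 1) := by
      nlinarith [sq_nonneg (q * L * s - 2 + q * L), sq_nonneg (q * L * s + 2 - q * L)]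
    rw [hts_def, div_lt_iff₀ hsp]
    linarith
  have hgt2 : 2 < q * L * (s + 1) := by
    rw [hts_def, div_lt_iff₀ hsp] at hqLts; linarith
  have hD0 : 0 < q * L * (s + 1) + 2 * q * E - 2 := by nlinarith
  have hξs0 : 0 < ξs := by rw [hξd]; positivity
  have hξs1 : ξs < 1 := by
    rw [hξd, div_lt_one hD0]; linarith
  have hV : V = (q * L + ts) * Real.exp ts / ts * (Real.exp K / q) := by
    have h1 : (q * L + ts) * Real.exp ts / ts * (Real.exp K / q)
        = (q * L + ts) * (Real.exp ts * Real.exp K) / (ts * q) := by ring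
    rw [hVd, h1, hEX]
    rw [div_eq_div_iff (by positivity) (by positivity)]
    field_simp
    linear_combination (q * L) * htss
  refine ⟨⟨hξs0, hξs1⟩, ?_, ?_⟩
  · -- main inequality
    rintro ξ p ⟨hξ0, hξ1⟩ ⟨hp0, hp1⟩ hfix
    have hd0 : 0 < ξ + p * q * (1 - ξ) := by
      have := mul_pos (mul_pos hp0 hq0) (by linarith : (0:ℝ) < 1 - ξ)
      linarith
    obtain ⟨t, ht_def⟩ : ∃ t, t = L * q * ξ / (ξ + p * q * (1 - ξ)) := ⟨_, rfl⟩
    have ht0 : 0 < t := by rw [ht_def]; positivity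
    have hp_eq : p = Real.exp (-t - K) := by
      rw [ht_def, ← neg_div]; exact hfix
    have hpX : Real.exp t * Real.exp K = p⁻¹ := by
      rw [hp_eq, ← Real.exp_add, ← Real.exp_neg]; congr 1; ring
    have htd : t * (ξ + p * q * (1 - ξ)) = L * q * ξ := by
      rw [ht_def]; field_simp [hd0.ne']
    have hA : 1 / ξ + 2 / (q * p) - 1 = (q * L + t) * Real.exp t / t * (Real.exp K / q) := by
      have h1 : (q * L + t) * Real.exp t / t * (Real.exp K / q)
          = (q * L + t) * (Real.exp t * Real.exp K) / (t * q) := by ring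
      rw [h1, hpX]
      field_simp [hξ0.ne', hp0.ne', ht0.ne', hq0.ne']
      linear_combination htd
    rw [hV, hA]
    exact mul_le_mul_of_nonneg_right (key12 (q * L) t ts hqL0 ht0 hts0 hquad)
      (by positivity : (0:ℝ) < Real.exp K / q).le
  · -- attainment
    refine ⟨E, ⟨hE0, hE1⟩, ?_, ?_⟩
    · have hden : 0 < ξs + E * q * (1 - ξs) := by
        have := mul_pos (mul_pos hE0 hq0) (by linarith : (0:ℝ) < 1 - ξs)
        linarith
      have hnum : L * q * ξs = ts * (ξs + E * q * (1 - ξs)) := by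
        rw [hξd]
        field_simp [hD0.ne', hE0.ne', hq0.ne']
        have hDi : (q * L * (s + 1) + 2 * q * E - 2) * (q * L * (s + 1) + 2 * q * E - 2)⁻¹ = 1 :=
          mul_inv_cancel₀ hD0.ne'
        linear_combination (-((q * L * (s + 1) + 2 * q * E - 2)⁻¹ * L * q)) * htss + ts * hDi
      conv_lhs => rw [hE_eq]
      congr 1
      rw [hnum, neg_div, mul_div_assoc, div_self hden.ne', mul_one]
    · rw [hVd, hξd]
      field_simp [hD0.ne', hE0.ne', hq0.ne']
      ring
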